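/- arXiv:2103.00605 — 2 statements merged into one kernel-verified Lean document; each statement's English description precedes it below -/
import Mathlib

section
/- Among all nonnegative tilting functions h, the harmonic mean h*(x) = (Σ_{l∈J} e_l(x)^{-1})^{-1} minimizes the functional V(h) = E[h(X)^2 Σ_{l∈J} e_l(X)^{-1}] / (E[h(X)])^2, and the minimum value is 1/E[h*(X)]. -/
open MeasureTheory

/-- Among all nonnegative tilting functions h, the harmonic mean
h*(x) = (Σ_l e_l(x)⁻¹)⁻¹ minimizes V(h) = E[h(X)² Σ_l e_l(X)⁻¹]/(E[h(X)])²,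
and the minimum value is 1/E[h*(X)]. -/
theorem overlap_tilting_minimizes_variance
    {Ω : Type*} [MeasurableSpace Ω] (μ : Measure Ω) [IsProbabilityMeasure μ]
    {𝒳 : Type*} [MeasurableSpace 𝒳] {J : Type*} [Fintype J]
    (hJ : 2 ≤ Fintype.card J)
    (X : Ω → 𝒳) (hX : Measurable X)
    (e : J → 𝒳 → ℝ) (he_meas : ∀ j, Measurable (e j))
    (he_pos : ∀ᵐ ω ∂μ, ∀ j, 0 < e j (X ω) ∧ e j (X ω) < 1)
    (he_sum : ∀ᵐ ω ∂μ, ∑ j : J, e j (X ω) = 1)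
    (hstar : 𝒳 → ℝ) (hhstar : ∀ x, hstar x = (∑ l : J, (e l x)⁻¹)⁻¹)
    (hstar_int : Integrable (fun ω => hstar (X ω)) μ)
    (hstar_pos : 0 < ∫ ω, hstar (X ω) ∂μ) :
    (∀ h : 𝒳 → ℝ, Measurable h → (∀ x, 0 ≤ h x) →
      Integrable (fun ω => h (X ω)) μ →
      0 < ∫ ω, h (X ω) ∂μ →
      Integrable (fun ω => (h (X ω))^2 * ∑ l : J, (e l (X ω))⁻¹) μ →
      (∫ ω, (hstar (X ω))^2 * ∑ l : J, (e l (X ω))⁻¹ ∂μ) /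
          (∫ ω, hstar (X ω) ∂μ)^2 ≤
        (∫ ω, (h (X ω))^2 * ∑ l : J, (e l (X ω))⁻¹ ∂μ) /
          (∫ ω, h (X ω) ∂μ)^2) ∧
    (∫ ω, (hstar (X ω))^2 * ∑ l : J, (e l (X ω))⁻¹ ∂μ) /
        (∫ ω, hstar (X ω) ∂μ)^2 = 1 / ∫ ω, hstar (X ω) ∂μ := by
  have hJne : Nonempty J := Fintype.card_pos_iff.mp (by omega)
  set S : Ω → ℝ := fun ω => ∑ l : J, (e l (X ω))⁻¹ with hSdef
  have hS_meas : Measurable S := by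
    apply Finset.measurable_sum
    exact fun l _ => ((he_meas l).comp hX).inv
  have hS_pos : ∀ᵐ ω ∂μ, 0 < S ω := by
    filter_upwards [he_pos] with ω hω
    exact Finset.sum_pos (fun l _ => inv_pos.mpr (hω l).1) Finset.univ_nonempty
  -- key pointwise identity for hstar
  have hstar_eq : ∀ ω, hstar (X ω) = (S ω)⁻¹ := fun ω => hhstar (X ω)
  have hstar2S : ∀ᵐ ω ∂μ, (hstar (X ω))^2 * S ω = hstar (X ω) := by
    filter_upwards [hS_pos] with ω hω
    rw [hstar_eq]
    field_simp
  have Ipos := hstar_pos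
  have Ine : (∫ ω, hstar (X ω) ∂μ) ≠ 0 := ne_of_gt Ipos
  have key2 : (∫ ω, (hstar (X ω))^2 * S ω ∂μ) = ∫ ω, hstar (X ω) ∂μ :=
    integral_congr_ae hstar2S
  constructor
  · intro h h_meas h_nonneg h_int h_pos h2S_int
    -- Cauchy–Schwarz: (∫ h)² ≤ (∫ h² S) (∫ hstar)
    set f : Ω → ℝ := fun ω => h (X ω) * Real.sqrt (S ω) with hfdef
    set g : Ω → ℝ := fun ω => Real.sqrt (hstar (X ω)) with hgdef
    have hf_meas : Measurable f := ((h_meas.comp hX)).mul hS_meas.sqrt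
    have hg_meas : Measurable g := by
      have : Measurable fun ω => hstar (X ω) := by
        simp only [hstar_eq]; exact hS_meas.inv
      exact this.sqrt
    have hf_nonneg : 0 ≤ᵐ[μ] f :=
      Filter.Eventually.of_forall fun ω =>
        mul_nonneg (h_nonneg _) (Real.sqrt_nonneg _)
    have hg_nonneg : 0 ≤ᵐ[μ] g :=
      Filter.Eventually.of_forall fun ω => Real.sqrt_nonneg _
    have hfsq : ∀ᵐ ω ∂μ, f ω ^ 2 = (h (X ω))^2 * S ω := by
      filter_upwards [hS_pos] with ω hω
      simp only [hfdef, mul_pow, Real.sq_sqrt hω.le]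
    have hgsq : ∀ᵐ ω ∂μ, g ω ^ 2 = hstar (X ω) := by
      filter_upwards [hS_pos] with ω hω
      simp only [hgdef, Real.sq_sqrt (by rw [hstar_eq]; positivity : (0:ℝ) ≤ hstar (X ω))]
    have hfsq_int : Integrable (fun ω => f ω ^ 2) μ := h2S_int.congr (by filter_upwards [hfsq] with ω hh; exact hh.symm)
    have hgsq_int : Integrable (fun ω => g ω ^ 2) μ := hstar_int.congr (by filter_upwards [hgsq] with ω hh; exact hh.symm)
    have hfL2 : MemLp f (ENNReal.ofReal 2) μ := by
      rw [show ENNReal.ofReal 2 = 2 by norm_num]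
      exact (memLp_two_iff_integrable_sq hf_meas.aestronglyMeasurable).mpr hfsq_int
    have hgL2 : MemLp g (ENNReal.ofReal 2) μ := by
      rw [show ENNReal.ofReal 2 = 2 by norm_num]
      exact (memLp_two_iff_integrable_sq hg_meas.aestronglyMeasurable).mpr hgsq_int
    have hfg : ∀ᵐ ω ∂μ, f ω * g ω = h (X ω) := by
      filter_upwards [hS_pos] with ω hω
      have hSne : S ω ≠ 0 := hω.ne'
      simp only [hfdef, hgdef, hstar_eq]
      rw [mul_assoc, ← Real.sqrt_mul hω.le, mul_inv_cancel₀ hSne, Real.sqrt_one, mul_one]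
    have CS := integral_mul_le_Lp_mul_Lq_of_nonneg
      (⟨by norm_num, by norm_num, by norm_num⟩ : Real.HolderConjugate 2 2) hf_nonneg hg_nonneg hfL2 hgL2
    rw [integral_congr_ae hfg] at CS
    have hrw1 : (∫ ω, f ω ^ (2:ℝ) ∂μ) = ∫ ω, (h (X ω))^2 * S ω ∂μ := by
      refine integral_congr_ae ?_
      filter_upwards [hfsq, hf_nonneg] with ω h1 h2
      rw [Real.rpow_two, h1]
    have hrw2 : (∫ ω, g ω ^ (2:ℝ) ∂μ) = ∫ ω, hstar (X ω) ∂μ := by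
      refine integral_congr_ae ?_
      filter_upwards [hgsq] with ω h1
      rw [Real.rpow_two, h1]
    rw [hrw1, hrw2] at CS
    set A := ∫ ω, (h (X ω))^2 * S ω ∂μ with hA
    set B := ∫ ω, h (X ω) ∂μ with hB
    set I := ∫ ω, hstar (X ω) ∂μ with hI
    have hA_nonneg : 0 ≤ A := by
      refine integral_nonneg_of_ae ?_
      filter_upwards [hS_pos] with ω hω
      positivity
    have hBsq : B ^ 2 ≤ A * I := by
      have hB_nonneg : 0 ≤ B := le_of_lt h_pos
      calc B ^ 2 = B * B := sq B
        _ ≤ (A ^ ((1:ℝ)/2) * I ^ ((1:ℝ)/2)) * (A ^ ((1:ℝ)/2) * I ^ ((1:ℝ)/2)) :=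
            mul_le_mul CS CS hB_nonneg (by positivity)
        _ = (A ^ ((1:ℝ)/2) * A ^ ((1:ℝ)/2)) * (I ^ ((1:ℝ)/2) * I ^ ((1:ℝ)/2)) := by ring
        _ = A * I := by
            rw [← Real.rpow_add' hA_nonneg (by norm_num), ← Real.rpow_add' Ipos.le (by norm_num)]
            norm_num
    -- conclude: key2 gives LHS = I / I² = 1/I
    rw [key2]
    have : I / I ^ 2 = 1 / I := by field_simp
    rw [this]
    rw [div_le_div_iff₀ Ipos (by positivity)]
    calc 1 * B ^ 2 = B ^ 2 := one_mul _
      _ ≤ A * I := hBsq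
    
  · rw [key2]
    field_simp
end

section
/- If a statistical functional φ admits the expansion θ̂_i = θ + φ'_i + (N−1)^{-1} Σ_{l≠i} φ''_{(l,i)} + R_{N,i} with E[φ'_i] = 0, E[φ''_{(l,i)} | O_i] = E[φ''_{(l,i)} | O_l] = 0 for l ≠ i, and √N max_i |R_{N,i}| → 0 in probability, then N^{-1/2} Σ_{i=1}^N (θ̂_i − θ − φ'_i) → 0 in probability; hence N^{-1/2} Σ_i (θ̂_i − θ) has the same limiting distribution as N^{-1/2} Σ_i φ'_i. -/
open MeasureTheory ProbabilityTheory Filter Topology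

lemma vm_tim_add {Ω : Type*} [MeasurableSpace Ω] (μ : Measure Ω) (f g : ℕ → Ω → ℝ)
    (hf : TendstoInMeasure μ f atTop (fun _ => 0))
    (hg : TendstoInMeasure μ g atTop (fun _ => 0)) :
    TendstoInMeasure μ (fun n ω => f n ω + g n ω) atTop (fun _ => 0) := by
  rw [tendstoInMeasure_iff_dist] at hf hg ⊢
  intro ε hε
  have h2 : (0:ℝ) < ε / 2 := by linarith
  have hf' := hf (ε/2) h2
  have hg' := hg (ε/2) h2
  have hsum := hf'.add hg'
  rw [add_zero] at hsum
  refine tendsto_of_tendsto_of_tendsto_of_le_of_le tendsto_const_nhds hsum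
    (fun n => zero_le) (fun n => ?_)
  refine le_trans (measure_mono ?_) (measure_union_le _ _)
  intro ω hω
  simp only [Set.mem_setOf_eq, dist_zero_right, Real.norm_eq_abs] at hω ⊢
  by_contra hc
  simp only [Set.mem_union, Set.mem_setOf_eq, not_or, not_le] at hc
  have : |f n ω + g n ω| ≤ |f n ω| + |g n ω| := abs_add_le _ _
  linarith [hc.1, hc.2]

lemma vm_tim_mono {Ω : Type*} [MeasurableSpace Ω] (μ : Measure Ω) (f g : ℕ → Ω → ℝ)
    (hle : ∀ᶠ n in atTop, ∀ ω, |f n ω| ≤ |g n ω|)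
    (hg : TendstoInMeasure μ g atTop (fun _ => 0)) :
    TendstoInMeasure μ f atTop (fun _ => 0) := by
  rw [tendstoInMeasure_iff_dist] at hg ⊢
  intro ε hε
  refine tendsto_of_tendsto_of_tendsto_of_le_of_le' tendsto_const_nhds (hg ε hε)
    (Eventually.of_forall fun n => zero_le) ?_
  filter_upwards [hle] with n hn
  refine measure_mono fun ω hω => ?_
  simp only [Set.mem_setOf_eq, dist_zero_right, Real.norm_eq_abs] at hω ⊢
  exact le_trans hω (hn ω)

lemma vm_le_biSup (g : ℕ → ℝ) (N i : ℕ) (hi : i ∈ Finset.range N) :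
    |g i| ≤ ⨆ j ∈ Finset.range N, |g j| := by
  have hbdd : BddAbove (Set.range fun j => ⨆ _ : j ∈ Finset.range N, |g j|) := by
    refine ⟨∑ j ∈ Finset.range N, |g j|, ?_⟩
    rintro y ⟨j, rfl⟩
    simp only []
    by_cases hj : j ∈ Finset.range N
    · rw [ciSup_pos hj]
      exact Finset.single_le_sum (fun k _ => abs_nonneg (g k)) hj
    · haveI : IsEmpty (j ∈ Finset.range N) := ⟨fun h => hj h⟩
      rw [Real.iSup_of_isEmpty]
      exact Finset.sum_nonneg fun k _ => abs_nonneg (g k)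
  exact le_ciSup_of_le hbdd i (by rw [ciSup_pos hi])

lemma vm_sum_erase (F : ℕ → ℕ → ℝ) (N : ℕ) :
    ∑ i ∈ Finset.range N, ∑ l ∈ (Finset.range N).erase i, F l i
      = ∑ p ∈ (Finset.range N ×ˢ Finset.range N).filter (fun p => p.1 ≠ p.2), F p.1 p.2 := by
  rw [Finset.sum_filter, Finset.sum_product, Finset.sum_comm]
  refine Finset.sum_congr rfl fun i _ => ?_
  rw [← Finset.sum_filter, Finset.filter_ne']

lemma vm_zero_term {Ω S : Type*} [MeasurableSpace Ω] [MeasurableSpace S]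
    (μ : Measure Ω) [IsProbabilityMeasure μ]
    (O : ℕ → Ω → S) (hO_meas : ∀ i, Measurable (O i))
    (hO_indep : iIndepFun O μ)
    (hO_ident : ∀ i, Measure.map (O i) μ = Measure.map (O 0) μ)
    (φ'' : S → S → ℝ) (hφ''_meas : Measurable (Function.uncurry φ''))
    (hdeg : ∀ᵐ x ∂(Measure.map (O 0) μ),
      ∫ s, φ'' s x ∂(Measure.map (O 0) μ) = 0)
    (a b c d : ℕ) (hab : a ≠ b) (hac : a ≠ c) (had : a ≠ d) (hcd : c ≠ d)
    (hint : Integrable (fun ω => φ'' (O a ω) (O b ω) * φ'' (O c ω) (O d ω)) μ) :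
    ∫ ω, φ'' (O a ω) (O b ω) * φ'' (O c ω) (O d ω) ∂μ = 0 := by
  classical
  set ν := Measure.map (O 0) μ with hν
  haveI : IsProbabilityMeasure ν := Measure.isProbabilityMeasure_map (hO_meas 0).aemeasurable
  set W : Ω → S × S × S := fun ω => (O b ω, O c ω, O d ω) with hWdef
  have hW : Measurable W := (hO_meas b).prodMk ((hO_meas c).prodMk (hO_meas d))
  set κ := Measure.map W μ with hκ
  haveI : IsProbabilityMeasure κ := Measure.isProbabilityMeasure_map hW.aemeasurable
  -- independence of O a and W
  have hindep : IndepFun (O a) W μ := by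
    have hdisj : Disjoint ({a} : Finset ℕ) ({b, c, d} : Finset ℕ) := by
      simp [Finset.disjoint_left, hab, hac, had]
    have h1 := hO_indep.indepFun_finset {a} {b, c, d} hdisj hO_meas
    have hbm : b ∈ ({b, c, d} : Finset ℕ) := by simp
    have hcm : c ∈ ({b, c, d} : Finset ℕ) := by simp
    have hdm : d ∈ ({b, c, d} : Finset ℕ) := by simp
    have h2 := h1.comp (_mγ := inferInstance) (_mγ' := inferInstance)
      (φ := fun v : (∀ i : ({a} : Finset ℕ), S) => v ⟨a, Finset.mem_singleton_self a⟩)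
      (ψ := fun v : (∀ i : ({b, c, d} : Finset ℕ), S) =>
        ((v ⟨b, hbm⟩, v ⟨c, hcm⟩, v ⟨d, hdm⟩) : S × S × S))
      (measurable_pi_apply _)
      (by fun_prop)
    exact h2
  have hlaw : Measure.map (fun ω => (O a ω, W ω)) μ = ν.prod κ := by
    rw [(indepFun_iff_map_prod_eq_prod_map_map (hO_meas a).aemeasurable hW.aemeasurable).mp hindep,
      hO_ident a]
  set g : S × (S × S × S) → ℝ := fun q => φ'' q.1 q.2.1 * φ'' q.2.2.1 q.2.2.2 with hgdef
  have hg : Measurable g := by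
    apply Measurable.mul
    · exact hφ''_meas.comp (measurable_fst.prodMk (measurable_fst.comp measurable_snd))
    · exact hφ''_meas.comp
        ((measurable_fst.comp (measurable_snd.comp measurable_snd)).prodMk
          (measurable_snd.comp (measurable_snd.comp measurable_snd)))
  have hpair_meas : Measurable (fun ω => (O a ω, W ω)) := (hO_meas a).prodMk hW
  have hgint : Integrable g (ν.prod κ) := by
    rw [← hlaw]
    exact (integrable_map_measure hg.aestronglyMeasurable hpair_meas.aemeasurable).mpr hint
  -- measurable set of degeneracy
  have hsm : StronglyMeasurable (fun x : S => ∫ s, φ'' s x ∂ν) := by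
    have h := ((hφ''_meas.comp measurable_swap).stronglyMeasurable :
      StronglyMeasurable (fun q : S × S => φ'' q.2 q.1))
    exact h.integral_prod_right'
  have hQ : MeasurableSet {x : S | ∫ s, φ'' s x ∂ν = 0} :=
    hsm.measurable (measurableSet_singleton 0)
  have hae_b : ∀ᵐ ω ∂μ, ∫ s, φ'' s (O b ω) ∂ν = 0 := by
    have h1 : ∀ᵐ x ∂(Measure.map (O b) μ), ∫ s, φ'' s x ∂ν = 0 := by
      rw [hO_ident b]; exact hdeg
    exact (ae_map_iff (hO_meas b).aemeasurable hQ).mp h1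
  have haeκ : ∀ᵐ v ∂κ, ∫ s, φ'' s v.1 ∂ν = 0 := by
    rw [hκ]
    exact (ae_map_iff hW.aemeasurable (hQ.preimage measurable_fst)).mpr hae_b
  calc ∫ ω, φ'' (O a ω) (O b ω) * φ'' (O c ω) (O d ω) ∂μ
      = ∫ q, g q ∂(Measure.map (fun ω => (O a ω, W ω)) μ) :=
        (integral_map hpair_meas.aemeasurable hg.aestronglyMeasurable).symm
    _ = ∫ q, g q ∂(ν.prod κ) := by rw [hlaw]
    _ = ∫ v, ∫ s, g (s, v) ∂ν ∂κ := integral_prod_symm g hgint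
    _ = 0 := by
        apply integral_eq_zero_of_ae
        filter_upwards [haeκ] with v hv
        show ∫ s, φ'' s v.1 * φ'' v.2.1 v.2.2 ∂ν = 0
        rw [integral_mul_const, hv, zero_mul]

lemma vm_second_moment {Ω S : Type*} [MeasurableSpace Ω] [MeasurableSpace S]
    (μ : Measure Ω) [IsProbabilityMeasure μ]
    (O : ℕ → Ω → S) (φ'' : S → S → ℝ)
    (hmf : ∀ a b : ℕ, AEStronglyMeasurable (fun ω => φ'' (O a ω) (O b ω)) μ)
    (hsymm : ∀ s s', φ'' s s' = φ'' s' s)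
    (v : ℝ)
    (hv : ∀ a b : ℕ, a ≠ b → ∫ ω, (φ'' (O a ω) (O b ω))^2 ∂μ = v)
    (hsq : ∀ a b : ℕ, a ≠ b → Integrable (fun ω => (φ'' (O a ω) (O b ω))^2) μ)
    (hzero : ∀ a b c d : ℕ, a ≠ b → a ≠ c → a ≠ d → c ≠ d →
      Integrable (fun ω => φ'' (O a ω) (O b ω) * φ'' (O c ω) (O d ω)) μ →
      ∫ ω, φ'' (O a ω) (O b ω) * φ'' (O c ω) (O d ω) ∂μ = 0)
    (N : ℕ) :
    ∫ ω, (∑ p ∈ (Finset.range N ×ˢ Finset.range N).filter (fun p => p.1 ≠ p.2),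
        φ'' (O p.1 ω) (O p.2 ω))^2 ∂μ = ((N:ℝ)^2 - N) * (2*v) := by
  classical
  set P := (Finset.range N ×ˢ Finset.range N).filter (fun p => p.1 ≠ p.2) with hP
  set f : ℕ × ℕ → Ω → ℝ := fun p ω => φ'' (O p.1 ω) (O p.2 ω) with hf
  have hprod : ∀ a b c d : ℕ, a ≠ b → c ≠ d →
      Integrable (fun ω => φ'' (O a ω) (O b ω) * φ'' (O c ω) (O d ω)) μ := by
    intro a b c d hab hcd
    refine Integrable.mono' ((hsq a b hab).add (hsq c d hcd))
      ((hmf a b).mul (hmf c d)) (Eventually.of_forall fun ω => ?_)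
    have h1 := sq_nonneg (|φ'' (O a ω) (O b ω)| - |φ'' (O c ω) (O d ω)|)
    have h2 := sq_abs (φ'' (O a ω) (O b ω))
    have h3 := sq_abs (φ'' (O c ω) (O d ω))
    rw [Real.norm_eq_abs, abs_mul]
    simp only [Pi.add_apply]
    nlinarith [abs_nonneg (φ'' (O a ω) (O b ω)), abs_nonneg (φ'' (O c ω) (O d ω))]
  have hint : ∀ p ∈ P, ∀ q ∈ P, Integrable (fun ω => f p ω * f q ω) μ := by
    intro p hp q hq
    rw [hP, Finset.mem_filter] at hp hq
    exact hprod p.1 p.2 q.1 q.2 hp.2 hq.2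
  have step1 : ∫ ω, (∑ p ∈ P, f p ω)^2 ∂μ
      = ∑ p ∈ P, ∑ q ∈ P, ∫ ω, f p ω * f q ω ∂μ := by
    have : ∀ ω, (∑ p ∈ P, f p ω)^2 = ∑ p ∈ P, ∑ q ∈ P, f p ω * f q ω := by
      intro ω; rw [sq, Finset.sum_mul_sum]
    simp_rw [this]
    rw [integral_finset_sum P (fun p hp => integrable_finset_sum P (fun q hq => hint p hp q hq))]
    exact Finset.sum_congr rfl fun p hp => integral_finset_sum P (fun q hq => hint p hp q hq)
  have step2 : ∀ p ∈ P, ∑ q ∈ P, ∫ ω, f p ω * f q ω ∂μ = v + v := by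
    intro p hp
    rw [hP, Finset.mem_filter, Finset.mem_product] at hp
    obtain ⟨⟨hp1, hp2⟩, h12⟩ := hp
    have hswap_mem : p.swap ∈ P := by
      rw [hP, Finset.mem_filter, Finset.mem_product]
      exact ⟨⟨hp2, hp1⟩, fun h => h12 h.symm⟩
    have hpmem : p ∈ P := by
      rw [hP, Finset.mem_filter, Finset.mem_product]; exact ⟨⟨hp1, hp2⟩, h12⟩
    have hpp : p ≠ p.swap := by
      intro h
      exact h12 (by rw [Prod.ext_iff] at h; exact h.1.trans rfl)
    have hsubset : ({p, p.swap} : Finset (ℕ × ℕ)) ⊆ P := by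
      intro q hq
      rcases Finset.mem_insert.mp hq with h | h
      · rwa [h]
      · rw [Finset.mem_singleton.mp h]; exact hswap_mem
    rw [← Finset.sum_sdiff hsubset]
    have hrest : ∑ q ∈ P \ {p, p.swap}, ∫ ω, f p ω * f q ω ∂μ = 0 := by
      apply Finset.sum_eq_zero
      intro q hq
      rw [Finset.mem_sdiff, hP, Finset.mem_filter] at hq
      obtain ⟨⟨hqmem, hq12⟩, hqne⟩ := hq
      have hqp : q ≠ p := fun h => hqne (by simp [h])
      have hqs : q ≠ p.swap := fun h => hqne (by simp [h])
      by_cases hac : p.1 = q.1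
      · have hbd : p.2 ≠ q.2 := fun h => hqp (Prod.ext hac.symm h.symm)
        have : ∀ ω, f p ω * f q ω = φ'' (O p.2 ω) (O p.1 ω) * φ'' (O q.1 ω) (O q.2 ω) := by
          intro ω; rw [hf]; simp only []; rw [hsymm (O p.1 ω) (O p.2 ω)]
        simp_rw [this]
        refine hzero p.2 p.1 q.1 q.2 (Ne.symm h12) (fun h => h12 (hac.trans h.symm)) hbd hq12
          (hprod p.2 p.1 q.1 q.2 (Ne.symm h12) hq12)
      · by_cases had : p.1 = q.2
        · have hbc : p.2 ≠ q.1 := fun h => hqs (Prod.ext h.symm had.symm)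
          have : ∀ ω, f p ω * f q ω = φ'' (O p.2 ω) (O p.1 ω) * φ'' (O q.1 ω) (O q.2 ω) := by
            intro ω; rw [hf]; simp only []; rw [hsymm (O p.1 ω) (O p.2 ω)]
          simp_rw [this]
          refine hzero p.2 p.1 q.1 q.2 (Ne.symm h12) hbc (fun h => h12 (had.trans h.symm))
            hq12 (hprod p.2 p.1 q.1 q.2 (Ne.symm h12) hq12)
        · exact hzero p.1 p.2 q.1 q.2 h12 hac had hq12 (hprod p.1 p.2 q.1 q.2 h12 hq12)
    rw [hrest, zero_add, Finset.sum_pair hpp]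
    have e1 : ∫ ω, f p ω * f p ω ∂μ = v := by
      have : ∀ ω, f p ω * f p ω = (φ'' (O p.1 ω) (O p.2 ω))^2 := by
        intro ω; rw [hf, sq]
      simp_rw [this]; exact hv p.1 p.2 h12
    have e2 : ∫ ω, f p ω * f p.swap ω ∂μ = v := by
      have : ∀ ω, f p ω * f p.swap ω = (φ'' (O p.1 ω) (O p.2 ω))^2 := by
        intro ω
        rw [hf, sq]
        show φ'' (O p.1 ω) (O p.2 ω) * φ'' (O p.2 ω) (O p.1 ω) = _
        rw [hsymm (O p.2 ω) (O p.1 ω)]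
      simp_rw [this]; exact hv p.1 p.2 h12
    rw [e1, e2]
  rw [step1, Finset.sum_congr rfl step2, Finset.sum_const]
  have hcard : P.card = N * N - N := by
    have hPeq : P = (Finset.range N).offDiag := by
      ext q
      simp [hP, Finset.mem_offDiag, Finset.mem_filter, Finset.mem_product, and_assoc]
    rw [hPeq, Finset.offDiag_card, Finset.card_range]
  rw [hcard]
  have hNN : N ≤ N * N := by
    cases N with
    | zero => simp
    | succ n => exact Nat.le_mul_of_pos_left _ (Nat.succ_pos n)
  rw [nsmul_eq_mul, Nat.cast_sub hNN]
  push_cast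
  ring
/-- If the pseudo-observations admit the second-order von Mises
expansion θ̂_i = θ + φ'_i + (N−1)⁻¹ Σ_{l≠i} φ''_{(l,i)} + R_{N,i} with a mean-zero
first-order term, a degenerate symmetric second-order kernel, and a uniformly
negligible remainder, then N^{-1/2} Σ_i (θ̂_i − θ − φ'_i) → 0 in probability. -/
theorem von_mises_expansion_first_order
    {Ω : Type*} [MeasurableSpace Ω] (μ : Measure Ω) [IsProbabilityMeasure μ]
    {S : Type*} [MeasurableSpace S]
    (O : ℕ → Ω → S) (hO_meas : ∀ i, Measurable (O i))
    -- i.i.d. sample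
    (hO_indep : iIndepFun O μ)
    (hO_ident : ∀ i, Measure.map (O i) μ = Measure.map (O 0) μ)
    (θ : ℝ) (φ' : S → ℝ) (φ'' : S → S → ℝ)
    (hφ'_meas : Measurable φ') (hφ''_meas : Measurable (Function.uncurry φ''))
    -- φ'_i i.i.d. mean zero with finite variance
    (hφ'_mean : ∫ ω, φ' (O 0 ω) ∂μ = 0)
    (hφ'_var : Integrable (fun ω => (φ' (O 0 ω))^2) μ)
    -- symmetric, square-integrable, degenerate kernel
    (hφ''_symm : ∀ s s', φ'' s s' = φ'' s' s)
    (hφ''_sq : Integrable (fun ω => (φ'' (O 0 ω) (O 1 ω))^2) μ)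
    (hφ''_deg : ∀ᵐ s ∂(Measure.map (O 0) μ), ∫ ω, φ'' s (O 0 ω) ∂μ = 0)
    -- pseudo-observations and remainder
    (θhat : ℕ → ℕ → Ω → ℝ) (R : ℕ → ℕ → Ω → ℝ)
    (hexp : ∀ N ≥ 2, ∀ i < N, ∀ ω,
      θhat N i ω = θ + φ' (O i ω) +
        ((N : ℝ) - 1)⁻¹ * (∑ l ∈ (Finset.range N).erase i, φ'' (O l ω) (O i ω)) +
        R N i ω)
    -- √N max_i |R_{N,i}| → 0 in probability
    (hR : TendstoInMeasure μ
      (fun (N : ℕ) ω => Real.sqrt (N : ℝ) * (⨆ i ∈ Finset.range N, |R N i ω|)) atTop (fun _ => 0)) :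
    TendstoInMeasure μ
      (fun (N : ℕ) ω => (Real.sqrt (N : ℝ))⁻¹ *
        ∑ i ∈ Finset.range N, (θhat N i ω - θ - φ' (O i ω)))
      atTop (fun _ => 0) := by
  classical
  set ν := Measure.map (O 0) μ with hν
  haveI : IsProbabilityMeasure ν := Measure.isProbabilityMeasure_map (hO_meas 0).aemeasurable
  -- basic measurability
  have hmf : ∀ a b : ℕ, Measurable (fun ω => φ'' (O a ω) (O b ω)) := fun a b =>
    hφ''_meas.comp ((hO_meas a).prodMk (hO_meas b))
  -- pair laws
  have hpair : ∀ a b : ℕ, a ≠ b →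
      Measure.map (fun ω => (O a ω, O b ω)) μ = ν.prod ν := by
    intro a b hab
    rw [(indepFun_iff_map_prod_eq_prod_map_map (hO_meas a).aemeasurable
      (hO_meas b).aemeasurable).mp (hO_indep.indepFun hab), hO_ident a, hO_ident b]
  set gsq : S × S → ℝ := fun p => (φ'' p.1 p.2)^2 with hgsqdef
  have hgsq : Measurable gsq := (hφ''_meas.comp (measurable_fst.prodMk measurable_snd)).pow_const 2
  have hsqν : Integrable gsq (ν.prod ν) := by
    rw [← hpair 0 1 (by norm_num)]
    exact (integrable_map_measure hgsq.aestronglyMeasurable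
      ((hO_meas 0).prodMk (hO_meas 1)).aemeasurable).mpr hφ''_sq
  have hsq : ∀ a b : ℕ, a ≠ b →
      Integrable (fun ω => (φ'' (O a ω) (O b ω))^2) μ := by
    intro a b hab
    exact (integrable_map_measure hgsq.aestronglyMeasurable
      ((hO_meas a).prodMk (hO_meas b)).aemeasurable).mp (by rw [hpair a b hab]; exact hsqν)
  set v : ℝ := ∫ p, gsq p ∂(ν.prod ν) with hvdef
  have hv : ∀ a b : ℕ, a ≠ b → ∫ ω, (φ'' (O a ω) (O b ω))^2 ∂μ = v := by
    intro a b hab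
    calc ∫ ω, (φ'' (O a ω) (O b ω))^2 ∂μ
        = ∫ p, gsq p ∂(Measure.map (fun ω => (O a ω, O b ω)) μ) :=
          (integral_map ((hO_meas a).prodMk (hO_meas b)).aemeasurable
            hgsq.aestronglyMeasurable).symm
      _ = v := by rw [hpair a b hab]
  -- degeneracy in kernel form
  have hdeg' : ∀ᵐ x ∂ν, ∫ s, φ'' s x ∂ν = 0 := by
    have h1 : ∀ᵐ x ∂ν, ∫ t, φ'' x t ∂ν = 0 := by
      filter_upwards [hφ''_deg] with x hx
      rw [← hx]
      exact integral_map (hO_meas 0).aemeasurable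
        ((hφ''_meas.comp (measurable_const.prodMk measurable_id)).aestronglyMeasurable)
    filter_upwards [h1] with x hx
    rw [← hx]
    exact integral_congr_ae (Eventually.of_forall fun s => hφ''_symm s x)
  -- product integrability
  have hprod : ∀ a b c d : ℕ, a ≠ b → c ≠ d →
      Integrable (fun ω => φ'' (O a ω) (O b ω) * φ'' (O c ω) (O d ω)) μ := by
    intro a b c d hab hcd
    refine Integrable.mono' ((hsq a b hab).add (hsq c d hcd))
      ((hmf a b).aestronglyMeasurable.mul (hmf c d).aestronglyMeasurable)
      (Eventually.of_forall fun ω => ?_)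
    have h1 := sq_nonneg (|φ'' (O a ω) (O b ω)| - |φ'' (O c ω) (O d ω)|)
    have h2 := sq_abs (φ'' (O a ω) (O b ω))
    have h3 := sq_abs (φ'' (O c ω) (O d ω))
    rw [Real.norm_eq_abs, abs_mul]
    simp only [Pi.add_apply]
    nlinarith [abs_nonneg (φ'' (O a ω) (O b ω)), abs_nonneg (φ'' (O c ω) (O d ω))]
  -- second moment of the U-statistic part
  have hT2 : ∀ N : ℕ,
      ∫ ω, (∑ p ∈ (Finset.range N ×ˢ Finset.range N).filter (fun p => p.1 ≠ p.2),
        φ'' (O p.1 ω) (O p.2 ω))^2 ∂μ = ((N:ℝ)^2 - N) * (2*v) := by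
    intro N
    exact vm_second_moment μ O φ'' (fun a b => (hmf a b).aestronglyMeasurable) hφ''_symm v hv hsq
      (fun a b c d h1 h2 h3 h4 hint =>
        vm_zero_term μ O hO_meas hO_indep hO_ident φ'' hφ''_meas hdeg' a b c d h1 h2 h3 h4 hint) N
  -- named pieces
  set T : ℕ → Ω → ℝ := fun N ω =>
    ∑ p ∈ (Finset.range N ×ˢ Finset.range N).filter (fun p => p.1 ≠ p.2),
      φ'' (O p.1 ω) (O p.2 ω) with hTdef
  set U : ℕ → Ω → ℝ := fun N ω => (Real.sqrt N)⁻¹ * (((N:ℝ) - 1)⁻¹ * T N ω) with hUdef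
  set Sr : ℕ → Ω → ℝ := fun N ω => (Real.sqrt N)⁻¹ * ∑ i ∈ Finset.range N, R N i ω with hSrdef
  -- integrability of U², T²
  have hT2int : ∀ N, Integrable (fun ω => (T N ω)^2) μ := by
    intro N
    have hident : ∀ ω, (T N ω)^2 =
        ∑ p ∈ (Finset.range N ×ˢ Finset.range N).filter (fun p => p.1 ≠ p.2),
        ∑ q ∈ (Finset.range N ×ˢ Finset.range N).filter (fun p => p.1 ≠ p.2),
          φ'' (O p.1 ω) (O p.2 ω) * φ'' (O q.1 ω) (O q.2 ω) := by
      intro ω; rw [hTdef]; simp only []; rw [sq, Finset.sum_mul_sum]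
    simp_rw [hident]
    refine integrable_finset_sum _ fun p hp => integrable_finset_sum _ fun q hq => ?_
    rw [Finset.mem_filter] at hp hq
    exact hprod p.1 p.2 q.1 q.2 hp.2 hq.2
  have hUint : ∀ N, Integrable (fun ω => (U N ω)^2) μ := by
    intro N
    have hident : ∀ ω, (U N ω)^2 = ((Real.sqrt N)⁻¹ * ((N:ℝ) - 1)⁻¹)^2 * (T N ω)^2 := by
      intro ω; rw [hUdef]; ring
    simp_rw [hident]
    exact (hT2int N).const_mul _
  -- value of ∫ U²
  have hUval : ∀ N : ℕ, 2 ≤ N → ∫ ω, (U N ω)^2 ∂μ = (2*v) * ((N:ℝ) - 1)⁻¹ := by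
    intro N hN
    have hident : ∀ ω, (U N ω)^2 = ((Real.sqrt N)⁻¹ * ((N:ℝ) - 1)⁻¹)^2 * (T N ω)^2 := by
      intro ω; rw [hUdef]; ring
    simp_rw [hident]
    rw [integral_const_mul, hT2 N]
    have hNR : (2:ℝ) ≤ (N:ℝ) := by exact_mod_cast hN
    have hNpos : (0:ℝ) < N := by linarith
    have hN1 : (0:ℝ) < (N:ℝ) - 1 := by linarith
    rw [mul_pow, inv_pow, inv_pow, Real.sq_sqrt hNpos.le]
    field_simp
  have hUtend : TendstoInMeasure μ U atTop (fun _ => 0) := by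
    rw [tendstoInMeasure_iff_dist]
    intro ε hε
    have hε2 : (0:ℝ) < ε^2 := by positivity
    have key : ∀ N : ℕ, 2 ≤ N → μ {ω | ε ≤ dist (U N ω) 0} ≤
        ENNReal.ofReal ((2*v/ε^2) * (((N:ℝ) - 1))⁻¹) := by
      intro N hN
      have hsub : {ω | ε ≤ dist (U N ω) 0} ⊆ {ω | ε^2 ≤ (U N ω)^2} := by
        intro ω hω
        simp only [Set.mem_setOf_eq, dist_zero_right, Real.norm_eq_abs] at hω ⊢
        calc ε^2 ≤ |U N ω|^2 := by nlinarith [abs_nonneg (U N ω)]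
          _ = (U N ω)^2 := sq_abs _
      have hm := mul_meas_ge_le_integral_of_nonneg
        (Eventually.of_forall fun ω => sq_nonneg (U N ω)) (hUint N) (ε^2)
      rw [hUval N hN] at hm
      have hmono : (μ {ω | ε ≤ dist (U N ω) 0}).toReal ≤
          (μ {ω | ε^2 ≤ (U N ω)^2}).toReal :=
        ENNReal.toReal_mono (measure_ne_top μ _) (measure_mono hsub)
      have h2 : (μ {ω | ε ≤ dist (U N ω) 0}).toReal ≤ (2*v/ε^2) * (((N:ℝ) - 1))⁻¹ := by
        have hx : (μ {ω | ε^2 ≤ (U N ω)^2}).toReal ≤ ((2*v) * ((N:ℝ)-1)⁻¹) / ε^2 := by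
          rw [le_div_iff₀ hε2]
          calc (μ {ω | ε^2 ≤ (U N ω)^2}).toReal * ε^2
              = ε^2 * (μ {ω | ε^2 ≤ (U N ω)^2}).toReal := by ring
            _ ≤ (2*v) * ((N:ℝ)-1)⁻¹ := hm
        calc (μ {ω | ε ≤ dist (U N ω) 0}).toReal
            ≤ (μ {ω | ε^2 ≤ (U N ω)^2}).toReal := hmono
          _ ≤ ((2*v) * ((N:ℝ)-1)⁻¹) / ε^2 := hx
          _ = (2*v/ε^2) * (((N:ℝ) - 1))⁻¹ := by ring
      calc μ {ω | ε ≤ dist (U N ω) 0}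
          = ENNReal.ofReal ((μ {ω | ε ≤ dist (U N ω) 0}).toReal) :=
            (ENNReal.ofReal_toReal (measure_ne_top μ _)).symm
        _ ≤ _ := ENNReal.ofReal_le_ofReal h2
    have hreal : Tendsto (fun N : ℕ => (2*v/ε^2) * (((N:ℝ) - 1))⁻¹) atTop (𝓝 0) := by
      have h1 : Tendsto (fun N : ℕ => ((N:ℝ) - 1)) atTop atTop := by
        have h0 := tendsto_atTop_add_const_right atTop (-1 : ℝ)
          (tendsto_natCast_atTop_atTop (R := ℝ))
        exact h0.congr (fun n => by ring)
      have h2 := h1.inv_tendsto_atTop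
      have h3 := h2.const_mul (2*v/ε^2)
      simpa using h3
    have hlim : Tendsto (fun N : ℕ => ENNReal.ofReal ((2*v/ε^2) * (((N:ℝ) - 1))⁻¹))
        atTop (𝓝 0) := by
      have := ENNReal.tendsto_ofReal hreal
      simpa using this
    exact tendsto_of_tendsto_of_tendsto_of_le_of_le' tendsto_const_nhds hlim
      (Eventually.of_forall fun n => zero_le) (eventually_atTop.mpr ⟨2, key⟩)
  have hSle : ∀ᶠ N in atTop, ∀ ω, |Sr N ω| ≤
      |Real.sqrt (N:ℝ) * (⨆ i ∈ Finset.range N, |R N i ω|)| := by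
    rw [eventually_atTop]
    refine ⟨1, fun N hN ω => ?_⟩
    have hNpos : (0:ℝ) < N := by exact_mod_cast Nat.pos_of_ne_zero (by omega)
    have hs : (0:ℝ) < Real.sqrt N := Real.sqrt_pos.mpr hNpos
    set M := ⨆ i ∈ Finset.range N, |R N i ω| with hM
    have hle1 : ∀ i ∈ Finset.range N, |R N i ω| ≤ M := fun i hi =>
      vm_le_biSup (fun j => R N j ω) N i hi
    have hM0 : 0 ≤ M := le_trans (abs_nonneg _) (hle1 0 (Finset.mem_range.mpr hN))
    have h1 : |∑ i ∈ Finset.range N, R N i ω| ≤ (N:ℝ) * M := by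
      calc |∑ i ∈ Finset.range N, R N i ω| ≤ ∑ i ∈ Finset.range N, |R N i ω| :=
            Finset.abs_sum_le_sum_abs _ _
        _ ≤ ∑ i ∈ Finset.range N, M := Finset.sum_le_sum hle1
        _ = (N:ℝ) * M := by rw [Finset.sum_const, Finset.card_range, nsmul_eq_mul]
    have h2 : |Sr N ω| ≤ (Real.sqrt N)⁻¹ * ((N:ℝ) * M) := by
      rw [hSrdef]
      simp only []
      rw [abs_mul, abs_inv, abs_of_nonneg (Real.sqrt_nonneg _)]
      exact mul_le_mul_of_nonneg_left h1 (inv_nonneg.mpr (Real.sqrt_nonneg _))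
    have h3 : (Real.sqrt N)⁻¹ * ((N:ℝ) * M) = Real.sqrt N * M := by
      have hss := Real.mul_self_sqrt hNpos.le
      field_simp
      linear_combination (-M) * hss
    calc |Sr N ω| ≤ Real.sqrt N * M := by rw [← h3]; exact h2
      _ ≤ |Real.sqrt N * M| := le_abs_self _
  have hStend : TendstoInMeasure μ Sr atTop (fun _ => 0) :=
    vm_tim_mono μ Sr _ hSle hR
  have hcomb := vm_tim_add μ U Sr hUtend hStend
  refine TendstoInMeasure.congr' ?_ EventuallyEq.rfl hcomb
  rw [eventually_atTop]
  refine ⟨2, fun N hN => Eventually.of_forall fun ω => ?_⟩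
  show U N ω + Sr N ω = (Real.sqrt N)⁻¹ * ∑ i ∈ Finset.range N, (θhat N i ω - θ - φ' (O i ω))
  have hsum : ∑ i ∈ Finset.range N, (θhat N i ω - θ - φ' (O i ω))
      = ((N:ℝ) - 1)⁻¹ * T N ω + ∑ i ∈ Finset.range N, R N i ω := by
    have hterm : ∀ i ∈ Finset.range N, θhat N i ω - θ - φ' (O i ω)
        = ((N:ℝ) - 1)⁻¹ * (∑ l ∈ (Finset.range N).erase i, φ'' (O l ω) (O i ω)) + R N i ω := by
      intro i hi
      rw [hexp N hN i (Finset.mem_range.mp hi) ω]; ring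
    rw [Finset.sum_congr rfl hterm, Finset.sum_add_distrib, ← Finset.mul_sum,
      vm_sum_erase (fun l i => φ'' (O l ω) (O i ω)) N]
  rw [hsum, mul_add]
end
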